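/- (Equilibria with dynamic shunt loads) Consider load susceptances b ∈ ℝ^n governed by the dynamic shunt model, whose equilibria satisfy 0 = Q_L − [E_L]²b for a fixed demand vector Q_L ∈ ℝ^n with strictly negative entries, coupled with the reduced power flow equation 0 = [E_L]²b + [E_L]B_red(E_L − E_L*). Then: (1) a pair (E_L, b) ∈ ℝ^n_{>0} × ℝ^n satisfies both equations if and only if E_L solves the constant-power reduced power flow equation 0 = Q_L + [E_L]B_red(E_L − E_L*) and b = [E_L]^{−2}Q_L (which then has strictly negative entries); (2) with Q_sc := [E_L*]B_red[E_L*], which is invertible, there exist a neighborhood U of 0, a C¹ map H with H(0) = 0, and C > 0 such that for all Q_L < 0 with Q_sc^{−1}Q_L ∈ U there is a unique such pair of the form E_L^{DS} = [E_L*](1_n − Q_sc^{−1}Q_L + ε) with ε = H(Q_sc^{−1}Q_L), ‖ε‖ ≤ C‖Q_sc^{−1}Q_L‖², and b^{DS} = [E_L^{DS}]^{−2}Q_L. -/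

import Mathlib

open Matrix


set_option maxHeartbeats 2000000 in
private lemma aux_ift {n : ℕ} (A : (Fin n → ℝ) ≃L[ℝ] (Fin n → ℝ)) :
    ∃ U : Set (Fin n → ℝ), IsOpen U ∧ (0 : Fin n → ℝ) ∈ U ∧
      ∃ H : (Fin n → ℝ) → (Fin n → ℝ), ContDiffOn ℝ 1 H U ∧ H 0 = 0 ∧
        ∃ C : ℝ, 0 < C ∧ ∀ x ∈ U, ‖x‖ < 1/4 ∧ ‖H x‖ < 1/4 ∧
          (A x + (1 - x + H x) * A (H x - x) = 0) ∧
          ‖H x‖ ≤ C * ‖x‖ ^ 2 ∧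
          ∀ ε ∈ U, (A x + (1 - x + ε) * A (ε - x) = 0) → ε = H x := by
  classical
  set V := Fin n → ℝ
  set G : V × V → V := fun p => A p.1 + (1 - p.1 + p.2) * A (p.2 - p.1) with hGdef
  set Φ : V × V → V × V := fun p => (p.1, G p) with hΦdef
  -- smoothness of Φ
  have hAc : ContDiff ℝ 1 (⇑A) := (A : V →L[ℝ] V).contDiff
  have hGc : ContDiff ℝ 1 G := by
    apply ContDiff.add
    · exact hAc.comp contDiff_fst
    · exact ((contDiff_const.sub contDiff_fst).add contDiff_snd).mul
        (hAc.comp (contDiff_snd.sub contDiff_fst))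
  have hΦc : ContDiff ℝ 1 Φ := contDiff_fst.prodMk hGc
  -- derivative of Φ at (0,0)
  set e : (V × V) ≃L[ℝ] (V × V) := (ContinuousLinearEquiv.refl ℝ V).prodCongr A with hedef
  have hΦ' : HasFDerivAt Φ (e : (V × V) →L[ℝ] (V × V)) ((0 : V), (0 : V)) := by
    have hA' : ∀ y : V, HasFDerivAt (⇑A) (A : V →L[ℝ] V) y := fun y =>
      (A : V →L[ℝ] V).hasFDerivAt
    have ha : HasFDerivAt (fun p : V × V => A p.1)
        ((A : V →L[ℝ] V).comp (ContinuousLinearMap.fst ℝ V V)) (0, 0) :=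
      (hA' _).comp _ hasFDerivAt_fst
    have hc : HasFDerivAt (fun p : V × V => (1 : V) - p.1 + p.2)
        ((0 : (V × V) →L[ℝ] V) - ContinuousLinearMap.fst ℝ V V + ContinuousLinearMap.snd ℝ V V)
        (0, 0) := ((hasFDerivAt_const (1 : V) _).sub hasFDerivAt_fst).add hasFDerivAt_snd
    have hd : HasFDerivAt (fun p : V × V => A (p.2 - p.1))
        ((A : V →L[ℝ] V).comp (ContinuousLinearMap.snd ℝ V V - ContinuousLinearMap.fst ℝ V V))
        (0, 0) := (hA' _).comp _ (hasFDerivAt_snd.sub hasFDerivAt_fst)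
    have hmul := hc.mul' hd
    have hG' := ha.add hmul
    have hΦ'' := hasFDerivAt_fst.prodMk hG'
    refine hΦ''.congr_fderiv ?_
    symm
    apply ContinuousLinearMap.ext
    intro p
    have h1 : ((0, 0) : V × V).1 = (0 : V) := rfl
    have h2 : ((0, 0) : V × V).2 = (0 : V) := rfl
    rw [h1, h2, sub_zero, add_zero, sub_zero, map_zero, one_smul]
    simp only [hedef, ContinuousLinearEquiv.coe_coe, ContinuousLinearEquiv.prodCongr_apply,
      ContinuousLinearEquiv.refl_apply, ContinuousLinearMap.prod_apply,
      ContinuousLinearMap.add_apply, ContinuousLinearMap.coe_comp', Function.comp_apply,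
      ContinuousLinearMap.coe_fst', ContinuousLinearMap.coe_snd',
      ContinuousLinearMap.smulRight_apply, ContinuousLinearMap.sub_apply, smul_zero,
      map_sub, add_zero]
    exact Prod.ext rfl (by simp only [MulOpposite.op_zero, zero_smul, ContinuousLinearMap.zero_apply, add_zero]; module)
  have hΦ00 : Φ ((0 : V), (0 : V)) = ((0 : V), (0 : V)) := by
    simp [hΦdef, hGdef]
  -- inverse function theorem
  have hs : HasStrictFDerivAt Φ (e : (V × V) →L[ℝ] (V × V)) ((0 : V), (0 : V)) :=
    (hΦc.contDiffAt).hasStrictFDerivAt' hΦ' one_ne_zero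
  set ph := hs.toOpenPartialHomeomorph Φ with hphdef
  have hphcoe : ⇑ph = Φ := rfl
  have h00s : ((0 : V), (0 : V)) ∈ ph.source := hs.mem_toOpenPartialHomeomorph_source
  have h00t : ((0 : V), (0 : V)) ∈ ph.target := by
    have := hs.image_mem_toOpenPartialHomeomorph_target
    rwa [hΦ00] at this
  have hΨ00 : ph.symm ((0 : V), (0 : V)) = ((0 : V), (0 : V)) := by
    conv_lhs => rw [← hΦ00, ← hphcoe]
    exact ph.left_inv h00s
  have hΨcd : ContDiffAt ℝ 1 (⇑ph.symm) ((0 : V), (0 : V)) := by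
    apply ph.contDiffAt_symm h00t (f₀' := e)
    · rw [hΨ00, hphcoe]; exact hΦ'
    · rw [hΨ00, hphcoe]; exact hΦc.contDiffAt
  set H : V → V := Prod.snd ∘ ⇑ph.symm ∘ fun x : V => ((x, (0 : V)) : V × V) with hHdef
  have hHx : ∀ x : V, H x = (ph.symm ((x : V), (0 : V))).2 := fun x => rfl
  have hH0 : H 0 = 0 := by rw [hHx 0, hΨ00]
  have hHcd : ContDiffAt ℝ 1 H 0 := by
    have h1 : ContDiffAt ℝ 1 (fun x : V => ((x, (0 : V)) : V × V)) 0 :=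
      contDiffAt_id.prodMk contDiffAt_const
    have h2 : ContDiffAt ℝ 1 (⇑ph.symm ∘ fun x : V => ((x, (0 : V)) : V × V)) 0 :=
      ContDiffAt.comp 0 hΨcd h1
    exact ContDiffAt.comp 0 contDiffAt_snd h2
  -- radius around (0,0) inside source and target
  have hst : ph.source ∩ ph.target ∈ nhds (((0 : V), (0 : V)) : V × V) :=
    Filter.inter_mem (ph.open_source.mem_nhds h00s) (ph.open_target.mem_nhds h00t)
  obtain ⟨r, hr0, hrsub⟩ := Metric.mem_nhds_iff.mp hst
  -- basic facts for small x
  have hmemt : ∀ x : V, ‖x‖ < r → (((x : V), (0 : V)) : V × V) ∈ ph.target := by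
    intro x hx
    apply (hrsub _).2
    have h0 : (((0 : V), (0 : V)) : V × V) = (0 : V × V) := rfl
    rw [Metric.mem_ball, h0, dist_zero_right, Prod.norm_def]
    simpa using hx
  have hkey : ∀ x : V, ‖x‖ < r →
      ((x, H x) : V × V) ∈ ph.source ∧ G (x, H x) = 0 := by
    intro x hx
    have ht := hmemt x hx
    have hsrc : ph.symm ((x : V), (0 : V)) ∈ ph.source := ph.map_target ht
    have hri : Φ (ph.symm ((x : V), (0 : V))) = ((x : V), (0 : V)) := by
      rw [← hphcoe]; exact ph.right_inv ht
    have hfst : (ph.symm ((x : V), (0 : V))).1 = x := congrArg Prod.fst hri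
    have hpair : (ph.symm ((x : V), (0 : V))) = ((x, H x) : V × V) := by
      rw [hHx x]; exact Prod.ext hfst rfl
    constructor
    · rwa [hpair] at hsrc
    · have hsnd : G (ph.symm ((x : V), (0 : V))) = 0 := congrArg Prod.snd hri
      rwa [hpair] at hsnd
  -- constants
  set c : ℝ := ‖(A.symm : V →L[ℝ] V)‖ * ‖(A : V →L[ℝ] V)‖ with hcdef
  have hc0 : 0 ≤ c := mul_nonneg (norm_nonneg _) (norm_nonneg _)
  set δ : ℝ := min r (1 / (4 * (c + 1))) with hδdef
  have hδ0 : 0 < δ := lt_min hr0 (by positivity)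
  have hδr : δ ≤ r := min_le_left _ _
  have hδc : δ ≤ 1 / (4 * (c + 1)) := min_le_right _ _
  have hδ4 : δ ≤ 1 / 4 := by
    refine hδc.trans ?_
    rw [div_le_div_iff₀ (by positivity) (by norm_num)]
    nlinarith
  -- neighborhood where everything holds
  obtain ⟨u, hu_mem, hu_cd⟩ := hHcd.contDiffOn le_rfl (by simp)
  have hHcont : ContinuousAt H 0 := hHcd.continuousAt
  have hpre : H ⁻¹' Metric.ball 0 δ ∈ nhds (0 : V) := by
    apply hHcont.preimage_mem_nhds
    rw [hH0]
    exact Metric.ball_mem_nhds _ hδ0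
  have hall : u ∩ (H ⁻¹' Metric.ball 0 δ ∩ Metric.ball 0 δ) ∈ nhds (0 : V) :=
    Filter.inter_mem hu_mem (Filter.inter_mem hpre (Metric.ball_mem_nhds _ hδ0))
  obtain ⟨U, hUsub, hUopen, hU0⟩ := mem_nhds_iff.mp hall
  have hUu : U ⊆ u := fun x hx => (hUsub hx).1
  have hUH : ∀ x ∈ U, ‖H x‖ < δ := by
    intro x hx
    have := (hUsub hx).2.1
    rwa [Set.mem_preimage, Metric.mem_ball, dist_zero_right] at this
  have hUx : ∀ x ∈ U, ‖x‖ < δ := by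
    intro x hx
    have := (hUsub hx).2.2
    rwa [Metric.mem_ball, dist_zero_right] at this
  refine ⟨U, hUopen, hU0, H, (hu_cd.mono hUu : ContDiffOn ℝ 1 H U), hH0,
    4 * c + 1, by positivity, ?_⟩
  intro x hxU
  have hxδ : ‖x‖ < δ := hUx x hxU
  have hxr : ‖x‖ < r := lt_of_lt_of_le hxδ hδr
  have hHδ : ‖H x‖ < δ := hUH x hxU
  obtain ⟨hsrc1, hGx⟩ := hkey x hxr
  have hGx' : A x + (1 - x + H x) * A (H x - x) = 0 := hGx
  refine ⟨lt_of_lt_of_le hxδ hδ4, lt_of_lt_of_le hHδ hδ4, hGx', ?_, ?_⟩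
  · -- quadratic bound
    have hmap : A (H x - x) = A (H x) - A x := map_sub _ _ _
    have hAH : A (H x) = -((H x - x) * A (H x - x)) := by
      rw [hmap] at hGx' ⊢
      linear_combination hGx'
    have h1 : ‖H x‖ ≤ c * ‖H x - x‖ ^ 2 := by
      calc ‖H x‖ = ‖A.symm (A (H x))‖ := by rw [A.symm_apply_apply]
        _ = ‖A.symm (-((H x - x) * A (H x - x)))‖ := by rw [hAH]
        _ ≤ ‖(A.symm : V →L[ℝ] V)‖ * ‖-((H x - x) * A (H x - x))‖ :=
            (A.symm : V →L[ℝ] V).le_opNorm _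
        _ = ‖(A.symm : V →L[ℝ] V)‖ * ‖(H x - x) * A (H x - x)‖ := by rw [norm_neg]
        _ ≤ ‖(A.symm : V →L[ℝ] V)‖ * (‖H x - x‖ * ‖A (H x - x)‖) := by
            gcongr
            exact norm_mul_le _ _
        _ ≤ ‖(A.symm : V →L[ℝ] V)‖ * (‖H x - x‖ * (‖(A : V →L[ℝ] V)‖ * ‖H x - x‖)) := by
            gcongr
            exact (A : V →L[ℝ] V).le_opNorm _
        _ = c * ‖H x - x‖ ^ 2 := by rw [hcdef]; ring
    have hw : ‖H x - x‖ ≤ ‖H x‖ + ‖x‖ := norm_sub_le _ _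
    have hw0 : (0 : ℝ) ≤ ‖H x - x‖ := norm_nonneg _
    have hst0 : (0 : ℝ) ≤ ‖H x‖ + ‖x‖ := by positivity
    have hb1 : ‖H x‖ ≤ c * (‖H x‖ + ‖x‖) ^ 2 := by
      have := mul_self_le_mul_self hw0 hw
      nlinarith [h1, hc0]
    have h4 : δ * (4 * (c + 1)) ≤ 1 := by
      have := hδc
      rw [le_div_iff₀ (by positivity)] at this
      linarith
    have harith : ∀ s t : ℝ, 0 ≤ s → 0 ≤ t → s ≤ c * (s + t) ^ 2 → s ≤ δ → t ≤ δ →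
        s ≤ (4 * c + 1) * t ^ 2 := by
      intro s t hs ht hb hsδ htδ
      have hsm : c * (s + t) ≤ 1 / 2 := by
        nlinarith [mul_nonneg hc0 (by linarith : (0:ℝ) ≤ 2 * δ - (s + t)), h4, hδ0.le]
      have hsle : s ≤ t := by
        nlinarith [mul_le_mul_of_nonneg_right hsm (by linarith : (0:ℝ) ≤ s + t), hb]
      nlinarith [hb, mul_le_mul_of_nonneg_left
        (mul_self_le_mul_self (by linarith : (0:ℝ) ≤ s + t) (by linarith : s + t ≤ 2 * t)) hc0,
        sq_nonneg t]
    exact harith ‖H x‖ ‖x‖ (norm_nonneg _) (norm_nonneg _) hb1 hHδ.le hxδ.le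
  · -- uniqueness
    intro ε hεU hGε
    have hεr : ‖ε‖ < r := lt_of_lt_of_le (hUx ε hεU) hδr
    have hmem1 : ((x, ε) : V × V) ∈ ph.source := by
      apply (hrsub _).1
      have h0 : (((0 : V), (0 : V)) : V × V) = (0 : V × V) := rfl
      rw [Metric.mem_ball, h0, dist_zero_right, Prod.norm_def]
      exact max_lt hxr hεr
    have hΦε : Φ ((x, ε) : V × V) = ((x : V), (0 : V)) := Prod.ext rfl hGε
    have hΦH : Φ ((x, H x) : V × V) = ((x : V), (0 : V)) := Prod.ext rfl hGx
    have := ph.injOn hmem1 hsrc1 (by rw [hphcoe, hΦε, hΦH])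
    exact congrArg Prod.snd this


set_option maxHeartbeats 2000000 in
/-- Equilibria with dynamic shunt loads. -/
theorem dynamic_shunt_equilibria {n : ℕ} (hn : 0 < n)
    (Bred : Matrix (Fin n) (Fin n) ℝ) (hsym : Bred.IsSymm)
    (hnd : (-Bred).PosDef) (hoff : ∀ i j, i ≠ j → 0 ≤ Bred i j)
    (ELstar : Fin n → ℝ) (hELstar : ∀ i, 0 < ELstar i) :
    -- (1) correspondence between dynamic-shunt equilibria and the constant-power
    -- reduced power flow equation
    (∀ QL : Fin n → ℝ, (∀ i, QL i < 0) →
      ∀ (EL b : Fin n → ℝ), (∀ i, 0 < EL i) →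
        ((((0 : Fin n → ℝ) = QL - fun i => (EL i) ^ 2 * b i) ∧
          ((0 : Fin n → ℝ) = (fun i => (EL i) ^ 2 * b i) +
            (Matrix.diagonal EL).mulVec (Bred.mulVec (EL - ELstar))))
        ↔
        (((0 : Fin n → ℝ) = QL +
            (Matrix.diagonal EL).mulVec (Bred.mulVec (EL - ELstar))) ∧
          (b = fun i => QL i / (EL i) ^ 2) ∧ (∀ i, b i < 0)))) ∧
    -- (2) perturbative existence and uniqueness of the equilibrium
    (let Qsc := Matrix.diagonal ELstar * Bred * Matrix.diagonal ELstar
     IsUnit Qsc.det ∧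
     ∃ U : Set (Fin n → ℝ), IsOpen U ∧ (0 : Fin n → ℝ) ∈ U ∧
       ∃ H : (Fin n → ℝ) → (Fin n → ℝ), ContDiffOn ℝ 1 H U ∧ H 0 = 0 ∧
         ∃ C : ℝ, 0 < C ∧
           ∀ QL : Fin n → ℝ, (∀ i, QL i < 0) → Qsc⁻¹.mulVec QL ∈ U →
             (∀ i, 0 < ELstar i *
               (1 - Qsc⁻¹.mulVec QL i + H (Qsc⁻¹.mulVec QL) i)) ∧
             ((0 : Fin n → ℝ) = QL +
               (Matrix.diagonal (fun i => ELstar i *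
                 (1 - Qsc⁻¹.mulVec QL i + H (Qsc⁻¹.mulVec QL) i))).mulVec
                 (Bred.mulVec ((fun i => ELstar i *
                   (1 - Qsc⁻¹.mulVec QL i + H (Qsc⁻¹.mulVec QL) i)) - ELstar))) ∧
             ‖H (Qsc⁻¹.mulVec QL)‖ ≤ C * ‖Qsc⁻¹.mulVec QL‖ ^ 2 ∧
             (∀ ε, ε ∈ U →
               (∀ i, 0 < ELstar i * (1 - Qsc⁻¹.mulVec QL i + ε i)) →
               ((0 : Fin n → ℝ) = QL +
                 (Matrix.diagonal (fun i => ELstar i *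
                   (1 - Qsc⁻¹.mulVec QL i + ε i))).mulVec
                   (Bred.mulVec ((fun i => ELstar i *
                     (1 - Qsc⁻¹.mulVec QL i + ε i)) - ELstar))) →
               ε = H (Qsc⁻¹.mulVec QL))) := by
    classical
  constructor
  · -- Part (1)
    intro QL hQL EL b hEL
    have hEL2 : ∀ i, (EL i) ^ 2 ≠ 0 := fun i => pow_ne_zero _ (hEL i).ne'
    constructor
    · rintro ⟨h1, h2⟩
      have h1' : ∀ i, QL i = (EL i) ^ 2 * b i := by
        intro i
        have := congrFun h1 i
        simp only [Pi.zero_apply, Pi.sub_apply] at this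
        linarith
      have h2' : ∀ i, 0 = (EL i) ^ 2 * b i + EL i * (Bred.mulVec (EL - ELstar)) i := by
        intro i
        have := congrFun h2 i
        simpa only [Pi.zero_apply, Pi.add_apply, Matrix.mulVec_diagonal] using this
      have hbeq : b = fun i => QL i / (EL i) ^ 2 := by
        funext i
        rw [h1' i, mul_div_cancel_left₀ _ (hEL2 i)]
      refine ⟨?_, hbeq, ?_⟩
      · funext i
        simp only [Pi.zero_apply, Pi.add_apply, Matrix.mulVec_diagonal]
        rw [h1' i]
        have := h2' i
        linarith
      · intro i
        rw [congrFun hbeq i]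
        exact div_neg_of_neg_of_pos (hQL i) (pow_pos (hEL i) 2)
    · rintro ⟨h1, hb, hbneg⟩
      have hQb : ∀ i, (EL i) ^ 2 * b i = QL i := by
        intro i
        rw [congrFun hb i, mul_comm, div_mul_cancel₀ _ (hEL2 i)]
      constructor
      · funext i
        simp only [Pi.zero_apply, Pi.sub_apply]
        rw [hQb i, sub_self]
      · funext i
        have h1i := congrFun h1 i
        simp only [Pi.zero_apply, Pi.add_apply, Matrix.mulVec_diagonal] at h1i ⊢
        rw [hQb i]
        exact h1i
  · -- Part (2)
    intro Qsc
    have hdetB : Bred.det ≠ 0 := by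
      have h1 : 0 < (-Bred).det := hnd.det_pos
      intro h
      rw [Matrix.det_neg, h, mul_zero] at h1
      exact lt_irrefl _ h1
    have hDpos : 0 < ∏ i, ELstar i := Finset.prod_pos fun i _ => hELstar i
    have hdetD : (Matrix.diagonal ELstar).det ≠ 0 := by
      rw [Matrix.det_diagonal]; exact hDpos.ne'
    have hQdet : Qsc.det ≠ 0 := by
      show (Matrix.diagonal ELstar * Bred * Matrix.diagonal ELstar).det ≠ 0
      rw [Matrix.det_mul, Matrix.det_mul]
      exact mul_ne_zero (mul_ne_zero hdetD hdetB) hdetD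
    have hUnit : IsUnit Qsc.det := isUnit_iff_ne_zero.mpr hQdet
    refine ⟨hUnit, ?_⟩
    set M : Matrix (Fin n) (Fin n) ℝ := Bred * Matrix.diagonal ELstar with hM
    have hdetM : M.det ≠ 0 := by
      rw [hM, Matrix.det_mul]
      exact mul_ne_zero hdetB hdetD
    have hMinv : Invertible M := M.invertibleOfIsUnitDet (isUnit_iff_ne_zero.mpr hdetM)
    set eA : (Fin n → ℝ) ≃L[ℝ] (Fin n → ℝ) :=
      (M.toLinearEquiv' hMinv).toContinuousLinearEquiv with heAdef
    have heA : ∀ v, eA v = M.mulVec v := by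
      intro v
      rw [heAdef]
      rw [LinearEquiv.coe_toContinuousLinearEquiv']
      have h := Matrix.toLinearEquiv'_apply M hMinv
      calc (M.toLinearEquiv' hMinv) v
          = ((M.toLinearEquiv' hMinv : Module.End ℝ (Fin n → ℝ))) v := rfl
        _ = (Matrix.toLin' M) v := by rw [h]
        _ = M.mulVec v := Matrix.toLin'_apply M v
    have hQscM : Qsc = Matrix.diagonal ELstar * M := by
      show Matrix.diagonal ELstar * Bred * Matrix.diagonal ELstar = _
      rw [hM, Matrix.mul_assoc]
    -- key algebraic identity
    have hiden : ∀ x ε : Fin n → ℝ,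
        (Qsc.mulVec x + (Matrix.diagonal (fun i => ELstar i * (1 - x i + ε i))).mulVec
          (Bred.mulVec ((fun i => ELstar i * (1 - x i + ε i)) - ELstar)))
        = fun i => ELstar i * (eA x + (1 - x + ε) * eA (ε - x)) i := by
      intro x ε
      have hE : ((fun i => ELstar i * (1 - x i + ε i)) - ELstar)
          = (Matrix.diagonal ELstar).mulVec (ε - x) := by
        funext j
        simp only [Pi.sub_apply, Matrix.mulVec_diagonal]
        ring
      funext i
      rw [Pi.add_apply, hQscM, ← Matrix.mulVec_mulVec, Matrix.mulVec_diagonal, hE,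
        Matrix.mulVec_diagonal, Matrix.mulVec_mulVec, ← hM]
      rw [Pi.add_apply, Pi.mul_apply, Pi.add_apply, Pi.sub_apply, Pi.one_apply,
        heA, heA]
      ring
    have hequiv : ∀ x ε : Fin n → ℝ,
        ((0 : Fin n → ℝ) = Qsc.mulVec x +
          (Matrix.diagonal (fun i => ELstar i * (1 - x i + ε i))).mulVec
            (Bred.mulVec ((fun i => ELstar i * (1 - x i + ε i)) - ELstar)))
        ↔ (eA x + (1 - x + ε) * eA (ε - x) = 0) := by
      intro x ε
      rw [hiden x ε]
      constructor
      · intro h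
        funext i
        have := (congrFun h i).symm
        simp only [Pi.zero_apply] at this ⊢
        rcases mul_eq_zero.mp this with h' | h'
        · exact absurd h' (hELstar i).ne'
        · exact h'
      · intro h
        funext i
        simp only [Pi.zero_apply, congrFun h i, mul_zero]
    obtain ⟨U, hUopen, hU0, H, hHcd, hH0, C, hC0, hmain⟩ := aux_ift eA
    refine ⟨U, hUopen, hU0, H, hHcd, hH0, C, hC0, ?_⟩
    intro QL hQL hxU
    set x : Fin n → ℝ := Qsc⁻¹.mulVec QL with hx
    have hQLx : Qsc.mulVec x = QL := by
      rw [hx, Matrix.mulVec_mulVec, Matrix.mul_nonsing_inv _ hUnit, Matrix.one_mulVec]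
    obtain ⟨hx4, hH4, hGeq, hbound, huniq⟩ := hmain x hxU
    refine ⟨?_, ?_, hbound, ?_⟩
    · intro i
      have hxi : |x i| ≤ ‖x‖ := by
        simpa [Real.norm_eq_abs] using norm_le_pi_norm x i
      have hHi : |H x i| ≤ ‖H x‖ := by
        simpa [Real.norm_eq_abs] using norm_le_pi_norm (H x) i
      have h1 := abs_le.mp hxi
      have h2 := abs_le.mp hHi
      have : 0 < 1 - x i + H x i := by linarith [hx4, hH4]
      exact mul_pos (hELstar i) this
    · rw [← hQLx]
      exact (hequiv x (H x)).mpr hGeq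
    · intro ε hεU hpos heq
      apply huniq ε hεU
      apply (hequiv x ε).mp
      rwa [← hQLx] at heq
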